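/- Let F be a field and fix integers n > r ≥ 0. Then the product set P_{r,n−r} · P°_{r+1} = { p p° : p ∈ P_{r,n−r}, p° ∈ P°_{r+1} } equals { g ∈ GL_n(F) : (g_{r+1,r+1}, g_{r+2,r+1}, …, g_{n,r+1}) ≠ 0 }, i.e., the set of invertible matrices g such that the last n−r entries of the (r+1)-th column of g are not all zero. -/

import Mathlib

open Matrix

/-- The parabolic subgroup `P_{r,n-r} ⊆ GL_n(F)` of block upper-triangular matrices
`[g, u; 0, h]` with `g ∈ GL_r(F)`, `h ∈ GL_{n-r}(F)` and `u` arbitrary. -/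
def Parab (n r : ℕ) (F : Type*) [Field F] : Set (GL (Fin n) F) :=
  {g | ∀ i j : Fin n, r ≤ (i : ℕ) → (j : ℕ) < r → (g : Matrix (Fin n) (Fin n) F) i j = 0}

/-- `P°_{r+1} ⊆ GL_n(F)`: the stabilizer of the `(r+1)`-th standard basis vector
`e_{r+1}` of `F^n`, i.e. matrices whose column of index `r` equals `e_{r+1}`. -/
def Pcirc (n r : ℕ) (F : Type*) [Field F] : Set (GL (Fin n) F) :=
  {g | ∀ i j : Fin n, (j : ℕ) = r →
        (g : Matrix (Fin n) (Fin n) F) i j = if (i : ℕ) = r then 1 else 0}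

section Aux

variable {n : ℕ} {F : Type*} [Field F]

private lemma sum_helper (u v : Fin n → F) (a i0 : Fin n) :
    ∑ k, (if k = i0 then u k else if a = k then v k else 0)
      = u i0 + if a = i0 then 0 else v a := by
  rw [← Finset.add_sum_erase _ _ (Finset.mem_univ i0), if_pos rfl]
  congr 1
  rw [Finset.sum_congr rfl (fun k hk => if_neg (Finset.ne_of_mem_erase hk)),
    Finset.sum_ite_eq _ a v]
  by_cases h : a = i0
  · simp [h]
  · simp [Finset.mem_erase, h]

/-- The identity matrix with column `i0` replaced by `c`. -/
private def Tmat (c : Fin n → F) (i0 : Fin n) : Matrix (Fin n) (Fin n) F :=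
  fun a b => if b = i0 then c a else if a = b then 1 else 0

/-- The inverse of `Tmat c i0` when `c i0 ≠ 0`. -/
private def Tinv (c : Fin n → F) (i0 : Fin n) : Matrix (Fin n) (Fin n) F := fun a b =>
  if b = i0 then (if a = i0 then (c i0)⁻¹ else -(c a) * (c i0)⁻¹) else if a = b then 1 else 0

/-- The permutation matrix of the transposition swapping `rr` and `i0`. -/
private def Smat (rr i0 : Fin n) : Matrix (Fin n) (Fin n) F := fun a b =>
  if a = Equiv.swap rr i0 b then 1 else 0

private theorem Tmul (c : Fin n → F) (i0 : Fin n) (hd : c i0 ≠ 0) :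
    Tmat c i0 * Tinv c i0 = 1 := by
  ext a b
  rw [Matrix.mul_apply]
  have : ∀ k, Tmat c i0 a k * Tinv c i0 k b
      = if k = i0 then c a * Tinv c i0 i0 b else if a = k then Tinv c i0 k b else 0 := by
    intro k
    simp only [Tmat]
    by_cases hk : k = i0
    · subst hk; simp
    · simp [hk, ite_mul, zero_mul, one_mul]
  rw [Finset.sum_congr rfl (fun k _ => this k), sum_helper]
  simp only [Tinv, Matrix.one_apply]
  by_cases hb : b = i0 <;> by_cases ha : a = i0
  · subst hb; subst ha; simp [mul_inv_cancel₀ hd]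
  · subst hb; simp [ha]
  · subst ha; simp [Ne.symm hb, hb]
  · by_cases hab : a = b <;> simp [hb, ha, hab, Ne.symm hb]

private theorem Tmul' (c : Fin n → F) (i0 : Fin n) (hd : c i0 ≠ 0) :
    Tinv c i0 * Tmat c i0 = 1 := by
  ext a b
  rw [Matrix.mul_apply]
  have : ∀ k, Tinv c i0 a k * Tmat c i0 k b
      = if k = i0 then (if a = i0 then (c i0)⁻¹ else -(c a) * (c i0)⁻¹) * Tmat c i0 i0 b
        else if a = k then Tmat c i0 k b else 0 := by
    intro k
    simp only [Tinv]
    by_cases hk : k = i0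
    · subst hk; simp
    · simp [hk, ite_mul, zero_mul, one_mul]
  rw [Finset.sum_congr rfl (fun k _ => this k), sum_helper]
  simp only [Tmat, Matrix.one_apply]
  by_cases hb : b = i0 <;> by_cases ha : a = i0
  · subst hb; subst ha; simp [inv_mul_cancel₀ hd]
  · subst hb
    simp only [if_pos rfl, if_neg ha]
    field_simp
    rw [if_pos trivial, if_pos trivial]; ring
  · subst ha; simp [Ne.symm hb, hb]
  · by_cases hab : a = b <;> simp [hb, ha, hab, Ne.symm hb]

private theorem mul_smat (M : Matrix (Fin n) (Fin n) F) (rr i0 : Fin n) (a b : Fin n) :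
    (M * (Smat rr i0 : Matrix (Fin n) (Fin n) F)) a b = M a (Equiv.swap rr i0 b) := by
  rw [Matrix.mul_apply]
  have : ∀ k, M a k * Smat rr i0 k b
      = if k = Equiv.swap rr i0 b then M a k else 0 := by
    intro k
    simp only [Smat]
    by_cases hk : k = Equiv.swap rr i0 b <;> simp [hk]
  rw [Finset.sum_congr rfl (fun k _ => this k), Finset.sum_ite_eq' _ (Equiv.swap rr i0 b)]
  simp

private theorem Smul (rr i0 : Fin n) :
    (Smat rr i0 : Matrix (Fin n) (Fin n) F) * Smat rr i0 = 1 := by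
  ext a b
  rw [mul_smat]
  simp [Smat, Matrix.one_apply, Equiv.swap_apply_self]

/-- The inverse of an element of the parabolic subgroup is in the parabolic subgroup. -/
private theorem parab_inv {r : ℕ} (p : GL (Fin n) F)
    (hp : ∀ i j : Fin n, r ≤ (i : ℕ) → (j : ℕ) < r → (p : Matrix (Fin n) (Fin n) F) i j = 0) :
    ∀ i j : Fin n, r ≤ (i : ℕ) → (j : ℕ) < r →
      ((p⁻¹ : GL (Fin n) F) : Matrix (Fin n) (Fin n) F) i j = 0 := by
  have : Invertible (p : Matrix (Fin n) (Fin n) F) := p.invertible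
  have hbt : BlockTriangular (p : Matrix (Fin n) (Fin n) F)
      (fun i : Fin n => if (i : ℕ) < r then (0:ℕ) else 1) := by
    intro i j hij
    simp only at hij
    by_cases h1 : (j:ℕ) < r <;> by_cases h2 : (i:ℕ) < r <;> simp [h1, h2] at hij <;>
      exact hp i j (by omega) h1
  have hib := blockTriangular_inv_of_blockTriangular hbt
  intro i j hi hj
  have h0 := hib (i := i) (j := j) (by simp [hj, Nat.not_lt.mpr hi])
  rwa [← Matrix.coe_units_inv] at h0

end Aux

/-- For a field `F` and `n > r ≥ 0`, the product set `P_{r,n-r} ⋅ P°_{r+1}` equals the set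
of invertible matrices `g` such that the last `n - r` entries of the `(r+1)`-th column of
`g` are not all zero. -/
theorem parabolic_mul_stabilizer (n r : ℕ) (hn : r < n) (F : Type*) [Field F] :
    {g : GL (Fin n) F | ∃ p ∈ Parab n r F, ∃ q ∈ Pcirc n r F, g = p * q} =
      {g : GL (Fin n) F | ∃ i j : Fin n, r ≤ (i : ℕ) ∧ (j : ℕ) = r ∧
        (g : Matrix (Fin n) (Fin n) F) i j ≠ 0} := by
  have rrval : ((⟨r, hn⟩ : Fin n) : ℕ) = r := rfl
  set rr : Fin n := ⟨r, hn⟩ with hrr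
  ext g
  simp only [Set.mem_setOf_eq]
  constructor
  · rintro ⟨p, hp, q, hq, rfl⟩
    -- column `rr` of `p * q` is column `rr` of `p`
    have hcol : ∀ k : Fin n, ((p * q : GL (Fin n) F) : Matrix (Fin n) (Fin n) F) k rr
        = (p : Matrix (Fin n) (Fin n) F) k rr := by
      intro k
      have : ((p * q : GL (Fin n) F) : Matrix (Fin n) (Fin n) F)
          = (p : Matrix (Fin n) (Fin n) F) * (q : Matrix (Fin n) (Fin n) F) := rfl
      rw [this, Matrix.mul_apply]
      have hterm : ∀ j : Fin n, (p : Matrix (Fin n) (Fin n) F) k j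
          * (q : Matrix (Fin n) (Fin n) F) j rr
          = if j = rr then (p : Matrix (Fin n) (Fin n) F) k j else 0 := by
        intro j
        rw [hq j rr rrval]
        by_cases hj : j = rr
        · rw [if_pos (by rw [hj, rrval]), if_pos hj, mul_one]
        · rw [if_neg (by simpa [Fin.ext_iff, rrval] using hj), if_neg hj, mul_zero]
      rw [Finset.sum_congr rfl (fun j _ => hterm j), Finset.sum_ite_eq' _ rr]
      simp
    by_contra hcon
    push_neg at hcon
    -- all entries of column `rr` of `p` with row index `≥ r` vanish
    have hzero : ∀ k : Fin n, r ≤ (k : ℕ) → (p : Matrix (Fin n) (Fin n) F) k rr = 0 := by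
      intro k hk
      rw [← hcol k]
      exact hcon k rr hk rrval
    have hpinv := parab_inv p hp
    have hone : ((1 : GL (Fin n) F) : Matrix (Fin n) (Fin n) F) rr rr = 1 := by
      simp
    rw [← inv_mul_cancel p] at hone
    have : ((p⁻¹ * p : GL (Fin n) F) : Matrix (Fin n) (Fin n) F) rr rr
        = ∑ k, ((p⁻¹ : GL (Fin n) F) : Matrix (Fin n) (Fin n) F) rr k
          * (p : Matrix (Fin n) (Fin n) F) k rr := rfl
    rw [this] at hone
    have hsum : ∀ k : Fin n, ((p⁻¹ : GL (Fin n) F) : Matrix (Fin n) (Fin n) F) rr k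
        * (p : Matrix (Fin n) (Fin n) F) k rr = 0 := by
      intro k
      by_cases hk : (k : ℕ) < r
      · rw [hpinv rr k (le_of_eq rrval.symm) hk, zero_mul]
      · rw [hzero k (by omega), mul_zero]
    rw [Finset.sum_congr rfl (fun k _ => hsum k), Finset.sum_const_zero] at hone
    exact one_ne_zero hone.symm
  · rintro ⟨i, j, hir, hjr, hne⟩
    have hj : j = rr := Fin.ext (by rw [hjr, rrval])
    subst hj
    -- the column vector and the pivot
    set c : Fin n → F := fun k => (g : Matrix (Fin n) (Fin n) F) k rr with hc
    have hd : c i ≠ 0 := hne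
    have hirr : (Equiv.swap rr i) rr = i := Equiv.swap_apply_left rr i
    -- the parabolic element
    set pMat : Matrix (Fin n) (Fin n) F := Tmat c i * Smat rr i with hpMat
    set pInv : Matrix (Fin n) (Fin n) F := Smat rr i * Tinv c i with hpInv
    have h1 : pMat * pInv = 1 := by
      rw [hpMat, hpInv, mul_assoc, ← mul_assoc (Smat rr i), Smul, one_mul, Tmul c i hd]
    have h2 : pInv * pMat = 1 := by
      rw [hpMat, hpInv, mul_assoc, ← mul_assoc (Tinv c i), Tmul' c i hd, one_mul, Smul]
    set pu : GL (Fin n) F := ⟨pMat, pInv, h1, h2⟩ with hpu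
    -- pMat is block upper-triangular
    have hpParab : pu ∈ Parab n r F := by
      intro a b ha hb
      show pMat a b = 0
      rw [hpMat, mul_smat]
      have hb1 : Equiv.swap rr i b = b :=
        Equiv.swap_apply_of_ne_of_ne
          (by simp [Fin.ext_iff, rrval]; omega) (by simp [Fin.ext_iff]; omega)
      rw [hb1]
      simp only [Tmat]
      rw [if_neg (by simp [Fin.ext_iff]; omega), if_neg (by simp [Fin.ext_iff]; omega)]
    -- column rr of pMat is c
    have hpcol : ∀ k : Fin n, pMat k rr = c k := by
      intro k
      rw [hpMat, mul_smat, hirr]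
      simp [Tmat]
    -- the stabilizer element
    have hqPcirc : pu⁻¹ * g ∈ Pcirc n r F := by
      intro a b hb
      have hb' : b = rr := Fin.ext (by rw [hb, rrval])
      subst hb'
      have hcoe : ((pu⁻¹ * g : GL (Fin n) F) : Matrix (Fin n) (Fin n) F)
          = pInv * (g : Matrix (Fin n) (Fin n) F) := rfl
      show ((pu⁻¹ * g : GL (Fin n) F) : Matrix (Fin n) (Fin n) F) a rr = _
      rw [hcoe, Matrix.mul_apply]
      have : ∀ k, pInv a k * (g : Matrix (Fin n) (Fin n) F) k rr
          = pInv a k * pMat k rr := by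
        intro k; rw [hpcol k]
      rw [Finset.sum_congr rfl (fun k _ => this k), ← Matrix.mul_apply, h2]
      rw [Matrix.one_apply]
      by_cases ha : a = rr
      · rw [if_pos ha, if_pos (by rw [ha, rrval])]
      · rw [if_neg ha, if_neg (by simpa [Fin.ext_iff, rrval] using ha)]
    exact ⟨pu, hpParab, pu⁻¹ * g, hqPcirc, (mul_inv_cancel_left pu g).symm⟩
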